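/- The trigonometric polynomials are dense in A_c(T): for every F ∈ B_c(T) and every ε > 0 there exist an integer N ≥ 0 and complex numbers a_{−N}, …, a_N such that the trigonometric polynomial p(t) = Σ_{k=−N}^{N} a_k e^{ikt} satisfies sup{ |F(β) − F(α) − ∫_α^β p(t) dt| : α ≤ β ≤ α + 2π } < ε. -/

import Mathlib

open MeasureTheory Real

lemma exp_int_integral (k : ℤ) (α β : ℝ) :
    (∫ t in α..β, Complex.exp (Complex.I * (k : ℂ) * (t : ℂ))) =
      if k = 0 then ((β : ℂ) - α)
      else (Complex.exp (Complex.I * k * β) - Complex.exp (Complex.I * k * α)) / (Complex.I * k) := by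
  by_cases hk : k = 0
  · simp [hk]
  · have hc : (Complex.I * (k : ℂ)) ≠ 0 :=
      mul_ne_zero Complex.I_ne_zero (Int.cast_ne_zero.mpr hk)
    simp only [hk, if_false]
    exact integral_exp_mul_complex hc

theorem trigonometric_polynomials_dense (F : ℝ → ℂ)
    (hFcont : Continuous F) (hF0 : F (-π) = 0)
    (hFper : ∀ x : ℝ, F (x + 2 * π) = F x + F π) :
    ∀ ε > (0 : ℝ), ∃ (N : ℕ) (a : ℤ → ℂ),
      sSup {r : ℝ | ∃ α β : ℝ, α ≤ β ∧ β ≤ α + 2 * π ∧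
        r = ‖(F β - F α -
          ∫ t in α..β, ∑ k ∈ Finset.Icc (-(N : ℤ)) (N : ℤ),
            a k * Complex.exp (Complex.I * (k : ℂ) * (t : ℂ)))‖} < ε := by
  intro ε hε
  have hπ : (0:ℝ) < π := Real.pi_pos
  have h2π : (0:ℝ) < 2*π := by positivity
  haveI : Fact ((0:ℝ) < 2*π) := ⟨h2π⟩
  set c0 : ℂ := F π / ((2*π : ℝ) : ℂ) with hc0
  set G : ℝ → ℂ := fun x => F x - c0 * ((x:ℂ) + (π:ℂ)) with hGdef
  have hc02 : c0 * ((2*π : ℝ) : ℂ) = F π := by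
    rw [hc0]
    have h : ((2*π : ℝ) : ℂ) ≠ 0 := by exact_mod_cast ne_of_gt h2π
    field_simp
  have hGper : Function.Periodic G (2*π) := by
    intro x
    simp only [hGdef]
    rw [hFper x]
    push_cast
    push_cast at hc02
    linear_combination -hc02
  have hGcont : Continuous G := by fun_prop
  let g : C(AddCircle (2*π), ℂ) := ⟨hGper.lift, hGcont.quotient_liftOn' _⟩
  have hg : ∀ x : ℝ, g (x : AddCircle (2*π)) = G x := fun x => hGper.lift_coe x
  -- density of trig polys
  have htop : g ∈ closure ((Submodule.span ℂ (Set.range (@fourier (2*π)))) : Set C(AddCircle (2*π), ℂ)) := by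
    rw [← Submodule.topologicalClosure_coe, span_fourier_closure_eq_top]
    trivial
  obtain ⟨q, hqmem, hqdist⟩ := Metric.mem_closure_iff.mp htop (ε/3) (by positivity)
  obtain ⟨c, hcq⟩ := Finsupp.mem_span_range_iff_exists_finsupp.mp hqmem
  set N : ℕ := c.support.sup (fun k => k.natAbs) with hN
  have hsupp : c.support ⊆ Finset.Icc (-(N:ℤ)) (N:ℤ) := by
    intro k hk
    have h1 : k.natAbs ≤ N := Finset.le_sup hk
    have h2 : |k| ≤ (N : ℤ) := by
      rw [Int.abs_eq_natAbs]; exact_mod_cast h1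
    rw [Finset.mem_Icc]
    exact abs_le.mp h2
  refine ⟨N, fun k => if k = 0 then c0 else Complex.I * k * c k, ?_⟩
  set a : ℤ → ℂ := fun k => if k = 0 then c0 else Complex.I * k * c k with ha
  -- evaluation of q at reals
  have hqv : ∀ x : ℝ, q ((x : ℝ) : AddCircle (2*π)) =
      ∑ k ∈ Finset.Icc (-(N:ℤ)) (N:ℤ), c k * Complex.exp (Complex.I * k * x) := by
    intro x
    have h1 : q ((x : ℝ) : AddCircle (2*π)) = ∑ k ∈ c.support, c k * (fourier k) ((x:ℝ) : AddCircle (2*π)) := by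
      rw [← hcq]
      rw [Finsupp.sum]
      simp [ContinuousMap.sum_apply]
    rw [h1]
    rw [Finset.sum_subset hsupp (by
      intro k _ hk
      simp [Finsupp.notMem_support_iff.mp hk])]
    refine Finset.sum_congr rfl (fun k _ => ?_)
    congr 1
    rw [fourier_coe_apply]
    congr 1
    have hπc : (π : ℂ) ≠ 0 := by exact_mod_cast Real.pi_ne_zero
    push_cast
    field_simp
  -- integral computation
  have hint : ∀ α β : ℝ,
      (∫ t in α..β, ∑ k ∈ Finset.Icc (-(N:ℤ)) (N:ℤ), a k * Complex.exp (Complex.I * (k:ℂ) * t)) =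
        c0 * ((β:ℂ) - α) + (q ((β:ℝ) : AddCircle (2*π)) - q ((α:ℝ) : AddCircle (2*π))) := by
    intro α β
    rw [intervalIntegral.integral_finset_sum (fun k _ => (Continuous.intervalIntegrable (by fun_prop) α β))]
    have hterm : ∀ k ∈ Finset.Icc (-(N:ℤ)) (N:ℤ),
        (∫ t in α..β, a k * Complex.exp (Complex.I * (k:ℂ) * t)) =
          (if k = 0 then c0 * ((β:ℂ) - α) else 0) +
            c k * (Complex.exp (Complex.I * k * β) - Complex.exp (Complex.I * k * α)) := by
      intro k _
      rw [intervalIntegral.integral_const_mul, exp_int_integral]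
      by_cases hk : k = 0
      · simp [ha, hk]
      · have hc : (Complex.I * (k : ℂ)) ≠ 0 :=
          mul_ne_zero Complex.I_ne_zero (Int.cast_ne_zero.mpr hk)
        simp only [ha, hk, if_false]
        field_simp
        ring
    rw [Finset.sum_congr rfl hterm, Finset.sum_add_distrib]
    have h0mem : (0:ℤ) ∈ Finset.Icc (-(N:ℤ)) (N:ℤ) := by
      simp [Finset.mem_Icc]
    rw [Finset.sum_ite_eq' (Finset.Icc (-(N:ℤ)) (N:ℤ)) (0:ℤ) (fun _ => c0 * ((β:ℂ) - α)), if_pos h0mem]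
    rw [hqv, hqv, ← Finset.sum_sub_distrib]
    congr 1
    exact Finset.sum_congr rfl (fun k _ => by ring)
  -- bound each element of the set
  have hbound : ∀ r ∈ {r : ℝ | ∃ α β : ℝ, α ≤ β ∧ β ≤ α + 2 * π ∧
        r = ‖(F β - F α -
          ∫ t in α..β, ∑ k ∈ Finset.Icc (-(N : ℤ)) (N : ℤ),
            a k * Complex.exp (Complex.I * (k : ℂ) * (t : ℂ)))‖}, r ≤ 2*(ε/3) := by
    rintro r ⟨α, β, hab, hb2, rfl⟩
    rw [hint α β]
    have hF : ∀ x : ℝ, F x = G x + c0 * ((x:ℂ) + π) := by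
      intro x; simp [hGdef]
    have key : F β - F α - (c0 * ((β:ℂ) - α) + (q ((β:ℝ) : AddCircle (2*π)) - q ((α:ℝ) : AddCircle (2*π)))) =
        (G β - q ((β:ℝ) : AddCircle (2*π))) - (G α - q ((α:ℝ) : AddCircle (2*π))) := by
      rw [hF β, hF α]; ring
    rw [key]
    have hb : ∀ x : ℝ, ‖G x - q ((x:ℝ) : AddCircle (2*π))‖ ≤ ε/3 := by
      intro x
      have : G x - q ((x:ℝ) : AddCircle (2*π)) = (g - q) ((x:ℝ) : AddCircle (2*π)) := by
        simp [hg]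
      rw [this]
      calc ‖(g - q) ((x:ℝ) : AddCircle (2*π))‖ ≤ ‖g - q‖ :=
            (g - q).norm_coe_le_norm _
        _ ≤ ε/3 := by
            rw [← dist_eq_norm]
            exact le_of_lt hqdist
    calc ‖_‖ ≤ ‖G β - q ((β:ℝ) : AddCircle (2*π))‖ +
          ‖G α - q ((α:ℝ) : AddCircle (2*π))‖ := by
          exact norm_sub_le (G β - q ((β:ℝ) : AddCircle (2*π))) (G α - q ((α:ℝ) : AddCircle (2*π)))
      _ ≤ ε/3 + ε/3 := add_le_add (hb β) (hb α)
      _ = 2*(ε/3) := by ring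
  have hne : (0:ℝ) ∈ {r : ℝ | ∃ α β : ℝ, α ≤ β ∧ β ≤ α + 2 * π ∧
        r = ‖(F β - F α -
          ∫ t in α..β, ∑ k ∈ Finset.Icc (-(N : ℤ)) (N : ℤ),
            a k * Complex.exp (Complex.I * (k : ℂ) * (t : ℂ)))‖} := by
    exact ⟨0, 0, le_refl 0, by linarith, by simp⟩
  calc sSup _ ≤ 2*(ε/3) := csSup_le ⟨0, hne⟩ hbound
    _ < ε := by linarith
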